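/- In the weak protection model, the incentive threshold is nondecreasing in the fraction of protected agents: if 0 ≤ u ≤ v ≤ 1 then c^u ≤ c^v. -/

import Mathlib

open Set

/-- In the weak protection model (`λ > 0`, `q ∈ (0,1]`, `ℓ > 0`,
`0 < p⁻ < p⁺ ≤ 1`), where `h(γ)` is the unique solution in `[0,1]` of
`h = 1 − (1 − p⁺ + γ(p⁺ − p⁻))·exp(−λ·q·h)` and `c^γ = (p⁺ − p⁻)·ℓ·exp(−λ·q·h(γ))`,
the incentive threshold is nondecreasing in the fraction of protected agents:
if `0 ≤ u ≤ v ≤ 1` then `c^u ≤ c^v`. -/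
lemma phi_hasDeriv (c z : ℝ) :
    HasDerivAt (fun t : ℝ => (1 - t) * Real.exp (c * t))
      (Real.exp (c * z) * (c * (1 - z) - 1)) z := by
  have h1 : HasDerivAt (fun t : ℝ => (1 - t)) (-1) z := by
    simpa using (hasDerivAt_id z).const_sub (1:ℝ)
  have h2 : HasDerivAt (fun t : ℝ => Real.exp (c * t)) (Real.exp (c * z) * c) z := by
    simpa [mul_comm] using ((hasDerivAt_id z).const_mul c).exp
  have : HasDerivAt (fun t : ℝ => (1 - t) * Real.exp (c * t)) _ z := h1.mul h2
  convert this using 1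
  ring

lemma phi_anti (c : ℝ) (hc : 0 < c) {x y : ℝ} (hx0 : 0 ≤ x) (hxy : x ≤ y) (hy1 : y ≤ 1)
    (hφ : (1 - x) * Real.exp (c * x) < 1) :
    (1 - y) * Real.exp (c * y) ≤ (1 - x) * Real.exp (c * x) := by
  rcases eq_or_lt_of_le hxy with rfl | hxy'
  · exact le_refl _
  have hx1 : x ≤ 1 := le_trans hxy hy1
  have hxpos : 0 < x := by
    rcases eq_or_lt_of_le hx0 with rfl | h
    · simp at hφ
    · exact h
  -- c * (1 - x) < 1
  have hkey : c * (1 - x) < 1 := by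
    nlinarith [Real.add_one_le_exp (c * x), hφ, hxpos, hx1]
  -- φ strictly antitone on [x, 1]
  have hanti : StrictAntiOn (fun t : ℝ => (1 - t) * Real.exp (c * t)) (Icc x 1) := by
    apply strictAntiOn_of_deriv_neg (convex_Icc x 1)
    · exact Continuous.continuousOn (by continuity)
    · intro z hz
      rw [interior_Icc] at hz
      rw [(phi_hasDeriv c z).deriv]
      have : c * (1 - z) - 1 < 0 := by nlinarith [hz.1, hz.2, hc.le]
      exact mul_neg_of_pos_of_neg (Real.exp_pos _) this
  exact (hanti ⟨le_refl x, hx1⟩ ⟨hxy, hy1⟩ hxy').le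

theorem stmt_13 (lam q ℓ pm pp : ℝ) (hlam : 0 < lam) (hq : q ∈ Ioc (0:ℝ) 1)
    (hℓ : 0 < ℓ) (hpm : 0 < pm) (hpmpp : pm < pp) (hpp : pp ≤ 1)
    (h : ℝ → ℝ)
    (hfix : ∀ γ ∈ Icc (0:ℝ) 1, h γ ∈ Icc (0:ℝ) 1 ∧
      h γ = 1 - (1 - pp + γ * (pp - pm)) * Real.exp (-(lam * q * h γ)))
    (u v : ℝ) (hu0 : 0 ≤ u) (huv : u ≤ v) (hv1 : v ≤ 1) :
    (pp - pm) * ℓ * Real.exp (-(lam * q * h u)) ≤ (pp - pm) * ℓ * Real.exp (-(lam * q * h v)) := by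
  obtain ⟨hq0, hq1⟩ := hq
  set c := lam * q with hcdef
  have hc : 0 < c := mul_pos hlam hq0
  obtain ⟨hu_mem, hu_eq⟩ := hfix u ⟨hu0, le_trans huv hv1⟩
  obtain ⟨hv_mem, hv_eq⟩ := hfix v ⟨le_trans hu0 huv, hv1⟩
  -- rewrite fixed point equations as φ(h γ) = A γ
  have key : ∀ γ hγ, hγ = 1 - (1 - pp + γ * (pp - pm)) * Real.exp (-(c * hγ)) →
      (1 - hγ) * Real.exp (c * hγ) = 1 - pp + γ * (pp - pm) := by
    intro γ hγ heq
    have hE : Real.exp (-(c * hγ)) * Real.exp (c * hγ) = 1 := by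
      rw [← Real.exp_add]; simp
    have : 1 - hγ = (1 - pp + γ * (pp - pm)) * Real.exp (-(c * hγ)) := by linarith
    calc (1 - hγ) * Real.exp (c * hγ)
        = (1 - pp + γ * (pp - pm)) * (Real.exp (-(c * hγ)) * Real.exp (c * hγ)) := by
          rw [this]; ring
      _ = 1 - pp + γ * (pp - pm) := by rw [hE, mul_one]
  have hAu := key u (h u) hu_eq
  have hAv := key v (h v) hv_eq
  have hAu1 : (1 - h u) * Real.exp (c * h u) < 1 := by
    rw [hAu]; nlinarith [le_trans huv hv1]
  have hAv1 : (1 - h v) * Real.exp (c * h v) < 1 := by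
    rw [hAv]; nlinarith
  -- main step: h v ≤ h u
  have hmain : h v ≤ h u := by
    by_contra hcon
    push_neg at hcon
    have := phi_anti c hc hu_mem.1 hcon.le hv_mem.2 hAu1
    rw [hAu, hAv] at this
    have huv' : u = v := by nlinarith
    rw [huv'] at hcon
    exact lt_irrefl _ hcon
  have : Real.exp (-(c * h u)) ≤ Real.exp (-(c * h v)) := by
    apply Real.exp_le_exp.mpr
    nlinarith
  calc (pp - pm) * ℓ * Real.exp (-(c * h u))
      ≤ (pp - pm) * ℓ * Real.exp (-(c * h v)) := by
        apply mul_le_mul_of_nonneg_left this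
        nlinarith
    _ = _ := rfl
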